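/- Separating direction for the grid (step (iii) of the proof of Theorem 9.2): Assume n ≥ 2 and let k be a positive integer. Then there exists a unit vector u ∈ ℝⁿ such that for all distinct x, y ∈ Σ_k one has |⟨x − y, u⟩| ≥ k^{−n} / (2·√2·5^{n−1}), where ⟨·,·⟩ is the Euclidean inner product. -/

import Mathlib

open scoped RealInnerProductSpace

noncomputable section

/-- The grid `Σ_k = [-1,1]ⁿ ∩ (1/k)·ℤⁿ` of the cube of mesh `1/k`. -/
def grid (n k : ℕ) : Set (EuclideanSpace ℝ (Fin n)) :=
  {x | (∀ i, |x i| ≤ 1) ∧ ∀ i, ∃ m : ℤ, x i = m / k}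

lemma digits_zero (B : ℤ) (hB : 1 < B) :
    ∀ (n : ℕ) (a : ℕ → ℤ), (∀ i, |a i| < B) →
      (∑ i ∈ Finset.range n, a i * B ^ i) = 0 → ∀ i < n, a i = 0 := by
  intro n
  induction n with
  | zero => intro a _ _ i hi; omega
  | succ n ih =>
    intro a ha hsum i hi
    rw [Finset.sum_range_succ'] at hsum
    have hdvd : B ∣ a 0 := by
      have h1 : a 0 = -∑ i ∈ Finset.range n, a (i + 1) * B ^ (i + 1) := by
        simp only [pow_zero, mul_one] at hsum; linarith
      rw [h1]
      exact dvd_neg.mpr (Finset.dvd_sum fun i _ => ⟨a (i + 1) * B ^ i, by ring⟩)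
    have ha0 : a 0 = 0 := Int.eq_zero_of_abs_lt_dvd hdvd (ha 0)
    have hsum' : (∑ i ∈ Finset.range n, a (i + 1) * B ^ i) = 0 := by
      have h2 : B * (∑ i ∈ Finset.range n, a (i + 1) * B ^ i) = 0 := by
        rw [Finset.mul_sum]
        simp only [ha0, pow_zero, mul_one, zero_mul, add_zero] at hsum
        rw [← hsum]
        exact Finset.sum_congr rfl fun i _ => by ring
      rcases mul_eq_zero.mp h2 with h | h
      · omega
      · exact h
    rcases i with _ | j
    · exact ha0
    · exact ih (fun i => a (i + 1)) (fun i => ha (i + 1)) hsum' j (by omega)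

lemma geom_le' (r : ℝ) (hr : 2 ≤ r) (n : ℕ) :
    ∑ i ∈ Finset.range (n + 1), r ^ i ≤ 2 * r ^ n := by
  induction n with
  | zero => simp
  | succ n ih =>
    rw [Finset.sum_range_succ]
    have hrpos : (0 : ℝ) ≤ r ^ n := by positivity
    have : 2 * r ^ n ≤ r ^ (n + 1) := by
      rw [pow_succ, mul_comm (r ^ n) r]
      exact mul_le_mul_of_nonneg_right hr hrpos
    nlinarith

theorem stmt8 (n : ℕ) (hn : 2 ≤ n) (k : ℕ) (hk : 0 < k) :
    ∃ u : EuclideanSpace ℝ (Fin n), ‖u‖ = 1 ∧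
      ∀ x ∈ grid n k, ∀ y ∈ grid n k, x ≠ y →
        ((k : ℝ) ^ n)⁻¹ / (2 * Real.sqrt 2 * 5 ^ (n - 1)) ≤ |⟪x - y, u⟫| := by
  have hk1 : (1 : ℝ) ≤ (k : ℝ) := by exact_mod_cast hk
  have hkpos : (0 : ℝ) < k := by positivity
  set v : EuclideanSpace ℝ (Fin n) := WithLp.toLp 2 (fun i : Fin n => ((5 * k : ℝ)) ^ (i : ℕ)) with hv
  have hv0 : v ≠ 0 := by
    intro h
    have : v ⟨0, by omega⟩ = 0 := by rw [h]; rfl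
    simp [hv] at this
  have hvnorm_pos : 0 < ‖v‖ := norm_pos_iff.mpr hv0
  -- norm bound
  have hvnorm : ‖v‖ ≤ Real.sqrt 2 * (5 * k) ^ (n - 1) := by
    have h5k : (2 : ℝ) ≤ (5 * k) ^ 2 := by nlinarith
    have hsum : ∑ i : Fin n, ‖v i‖ ^ 2 ≤ 2 * ((5 * k : ℝ) ^ (n - 1)) ^ 2 := by
      have : ∑ i : Fin n, ‖v i‖ ^ 2 = ∑ i ∈ Finset.range n, ((5 * k : ℝ) ^ 2) ^ i := by
        rw [← Fin.sum_univ_eq_sum_range (fun i => ((5 * k : ℝ) ^ 2) ^ i) n]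
        refine Finset.sum_congr rfl fun i _ => ?_
        rw [Real.norm_eq_abs, abs_of_nonneg (by positivity), ← pow_mul, ← pow_mul, mul_comm (i:ℕ) 2]
      rw [this]
      obtain ⟨m, hm⟩ : ∃ m, n = m + 1 := ⟨n - 1, by omega⟩
      subst hm
      calc ∑ i ∈ Finset.range (m + 1), ((5 * k : ℝ) ^ 2) ^ i
          ≤ 2 * ((5 * k : ℝ) ^ 2) ^ m := geom_le' _ h5k m
        _ = 2 * ((5 * k : ℝ) ^ (m + 1 - 1)) ^ 2 := by rw [Nat.add_sub_cancel, ← pow_mul, ← pow_mul, mul_comm m 2]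
    rw [EuclideanSpace.norm_eq]
    have h2 : Real.sqrt 2 * (5 * k : ℝ) ^ (n - 1) =
        Real.sqrt (2 * ((5 * k : ℝ) ^ (n - 1)) ^ 2) := by
      rw [Real.sqrt_mul (by norm_num), Real.sqrt_sq (by positivity)]
    rw [h2]
    exact Real.sqrt_le_sqrt (by simpa using hsum)
  refine ⟨‖v‖⁻¹ • v, ?_, ?_⟩
  · rw [norm_smul, norm_inv, norm_norm, inv_mul_cancel₀ (ne_of_gt hvnorm_pos)]
  intro x hx y hy hxy
  obtain ⟨hx1, hx2⟩ := hx
  obtain ⟨hy1, hy2⟩ := hy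
  choose mx hmx using hx2
  choose my hmy using hy2
  -- the integer coefficients
  set a : ℕ → ℤ := fun j => if h : j < n then mx ⟨j, h⟩ - my ⟨j, h⟩ else 0 with ha
  have hbound : ∀ j, |a j| < 5 * (k : ℤ) := by
    intro j
    rw [ha]
    by_cases h : j < n
    · simp only [h, dif_pos]
      have h1 : |(mx ⟨j, h⟩ : ℝ)| ≤ k := by
        have := hx1 ⟨j, h⟩; rw [hmx ⟨j, h⟩] at this
        rw [abs_div, abs_of_nonneg (le_of_lt hkpos)] at this
        calc |(mx ⟨j, h⟩ : ℝ)| = |(mx ⟨j, h⟩ : ℝ)| / k * k := by field_simp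
          _ ≤ 1 * k := by apply mul_le_mul_of_nonneg_right this (le_of_lt hkpos)
          _ = k := one_mul _
      have h2 : |(my ⟨j, h⟩ : ℝ)| ≤ k := by
        have := hy1 ⟨j, h⟩; rw [hmy ⟨j, h⟩] at this
        rw [abs_div, abs_of_nonneg (le_of_lt hkpos)] at this
        calc |(my ⟨j, h⟩ : ℝ)| = |(my ⟨j, h⟩ : ℝ)| / k * k := by field_simp
          _ ≤ 1 * k := by apply mul_le_mul_of_nonneg_right this (le_of_lt hkpos)
          _ = k := one_mul _
      have h1' : |mx ⟨j, h⟩| ≤ (k : ℤ) := by exact_mod_cast (by rwa [← Int.cast_abs] at h1 : ((|mx ⟨j, h⟩| : ℤ) : ℝ) ≤ k)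
      have h2' : |my ⟨j, h⟩| ≤ (k : ℤ) := by exact_mod_cast (by rwa [← Int.cast_abs] at h2 : ((|my ⟨j, h⟩| : ℤ) : ℝ) ≤ k)
      have hkz : (0 : ℤ) < k := by exact_mod_cast hk
      calc |mx ⟨j, h⟩ - my ⟨j, h⟩| ≤ |mx ⟨j, h⟩| + |my ⟨j, h⟩| := abs_sub _ _
        _ < 5 * k := by omega
    · simp only [h, dif_neg, not_false_iff, abs_zero]
      positivity
  set S : ℤ := ∑ i ∈ Finset.range n, a i * (5 * k) ^ i with hS
  have hSne : S ≠ 0 := by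
    intro h0
    have hall := digits_zero (5 * k) (by exact_mod_cast by omega : (1:ℤ) < 5 * k) n a hbound h0
    apply hxy
    ext i
    have : a i.val = 0 := hall i.val i.isLt
    rw [ha] at this
    simp only [i.isLt, dif_pos] at this
    rw [hmx i, hmy i]
    have : mx ⟨i.val, i.isLt⟩ = my ⟨i.val, i.isLt⟩ := by omega
    rw [Fin.eta] at this
    rw [this]
  have hS1 : (1 : ℝ) ≤ |(S : ℝ)| := by
    rw [← Int.cast_abs]
    exact_mod_cast Int.one_le_abs hSne
  -- inner product computation
  have hinner : ⟪x - y, v⟫ = (S : ℝ) / k := by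
    simp only [PiLp.inner_apply, RCLike.inner_apply, conj_trivial]
    have : ∀ i : Fin n, (x - y) i * v i = ((a i.val : ℝ) * (5 * k) ^ (i : ℕ)) / k := by
      intro i
      have hxyi : (x - y) i = x i - y i := rfl
      rw [hxyi, hmx i, hmy i, hv, ha]
      simp only [i.isLt, dif_pos, Fin.eta]
      push_cast
      field_simp
    rw [Finset.sum_congr rfl (fun i _ => (mul_comm _ _).trans (this i)), ← Finset.sum_div, hS]
    push_cast
    rw [Fin.sum_univ_eq_sum_range (fun i => (a i : ℝ) * (5 * k) ^ i) n]
  have hinner_lb : 1 / (k : ℝ) ≤ |⟪x - y, v⟫| := by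
    rw [hinner, abs_div, abs_of_nonneg (le_of_lt hkpos)]
    gcongr
  -- final computation
  have key : ⟪x - y, ‖v‖⁻¹ • v⟫ = ‖v‖⁻¹ * ⟪x - y, v⟫ := real_inner_smul_right _ _ _
  rw [key, abs_mul, abs_of_nonneg (by positivity)]
  have step1 : (Real.sqrt 2 * (5 * k) ^ (n - 1))⁻¹ * (1 / k) ≤ ‖v‖⁻¹ * |⟪x - y, v⟫| := by
    apply mul_le_mul
    · exact inv_anti₀ hvnorm_pos hvnorm
    · exact hinner_lb
    · positivity
    · positivity
  refine le_trans ?_ step1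
  have hs2 : Real.sqrt 2 ≠ 0 := by positivity
  have h5 : ((5:ℝ) ^ (n - 1)) ≠ 0 := by positivity
  have hk0 : (k : ℝ) ≠ 0 := ne_of_gt hkpos
  have hkn0 : ((k:ℝ) ^ n) ≠ 0 := by positivity
  have hkn : (k : ℝ) ^ n = (k : ℝ) ^ (n - 1) * k := by
    conv_lhs => rw [show n = (n - 1) + 1 by omega]
    rw [pow_succ]
  have cpos : (0:ℝ) < Real.sqrt 2 * 5 ^ (n - 1) * (k:ℝ) ^ n := by positivity
  have e1 : ((k:ℝ) ^ n)⁻¹ / (2 * Real.sqrt 2 * 5 ^ (n - 1))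
      = (2 * (Real.sqrt 2 * 5 ^ (n - 1) * (k:ℝ) ^ n))⁻¹ := by
    field_simp
  have e2 : (Real.sqrt 2 * (5 * (k:ℝ)) ^ (n - 1))⁻¹ * (1 / k)
      = (Real.sqrt 2 * 5 ^ (n - 1) * (k:ℝ) ^ n)⁻¹ := by
    rw [mul_pow, hkn]; field_simp
  rw [e1, e2]
  exact inv_anti₀ cpos (by linarith)
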